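/- For all n ≥ 0 and k ≥ 0, q^{k(k+1)} · S_B[n,k] = Σ_{ρ ∈ S_B(⟨n⟩,k)} q^{los_{B'}(ρ)}, where the sum is over standard type B partitions of ⟨n⟩ with 2k+1 blocks. -/

import Mathlib

open Finset Polynomial

/-- The ground set ⟨n⟩ = {-n, ..., -1, 0, 1, ..., n}. -/
noncomputable def angleB (n : ℕ) : Finset ℤ := Finset.Icc (-(n : ℤ)) (n : ℤ)

/-- An ordered type B (signed) partition of ⟨n⟩ with 2k+1 blocks:
pairwise disjoint nonempty blocks covering ⟨n⟩, with 0 ∈ S₀, S₀ closed under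
negation, and S_{2i} = -S_{2i-1} for i ≥ 1. -/
def IsOrderedB (n k : ℕ) (S : Fin (2*k+1) → Finset ℤ) : Prop :=
  (∀ i, (S i).Nonempty) ∧
  (∀ i j, i ≠ j → Disjoint (S i) (S j)) ∧
  (Finset.univ.biUnion S = angleB n) ∧
  ((0 : ℤ) ∈ S 0) ∧
  (∀ x ∈ S 0, -x ∈ S 0) ∧
  (∀ i : ℕ, 1 ≤ i → ∀ h : 2*i < 2*k+1,
    S ⟨2*i, h⟩ = (S ⟨2*i-1, by omega⟩).image (fun x => -x))

/-- m_j = min |S_j| (0 if the block is empty). -/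
def mB {m : ℕ} (S : Fin m → Finset ℤ) (j : Fin m) : ℤ :=
  WithTop.untopD 0 (((S j).image (fun x => |x|)).min)

/-- M_j = max |S_j| (0 if the block is empty). -/
def MB {m : ℕ} (S : Fin m → Finset ℤ) (j : Fin m) : ℤ :=
  WithBot.unbotD 0 (((S j).image (fun x => |x|)).max)

/-- A standard type B partition: ordered, with m_{2i} ∈ S_{2i} for i ≥ 1 and
0 = m₀ < m₂ < m₄ < ... < m_{2k}. -/
def IsStandardB (n k : ℕ) (S : Fin (2*k+1) → Finset ℤ) : Prop :=
  IsOrderedB n k S ∧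
  (∀ i : ℕ, 1 ≤ i → ∀ h : 2*i < 2*k+1, mB S ⟨2*i, h⟩ ∈ S ⟨2*i, h⟩) ∧
  (∀ i : ℕ, ∀ h : 2*(i+1) < 2*k+1, mB S ⟨2*i, by omega⟩ < mB S ⟨2*(i+1), h⟩)

/-- inv ρ: number of pairs (s, S_j) with s ∈ S_i for some i < j and s ≥ m_j. -/
noncomputable def invB {m : ℕ} (S : Fin m → Finset ℤ) : ℕ :=
  {p : ℤ × Fin m | (∃ i < p.2, p.1 ∈ S i) ∧ mB S p.2 ≤ p.1}.ncard

/-- ros_B = inv. -/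
noncomputable def rosB {m : ℕ} (S : Fin m → Finset ℤ) : ℕ := invB S

/-- los_{B'}: pairs (s, S_j) with s ∈ S_i for some i > j and s ≥ m_j. -/
noncomputable def losB' {m : ℕ} (S : Fin m → Finset ℤ) : ℕ :=
  {p : ℤ × Fin m | (∃ i, p.2 < i ∧ p.1 ∈ S i) ∧ mB S p.2 ≤ p.1}.ncard

/-- lob_{B'}: pairs (s, S_j) with s ∈ S_i for some i > j and 0 < s ≤ m_j. -/
noncomputable def lobB' {m : ℕ} (S : Fin m → Finset ℤ) : ℕ :=
  {p : ℤ × Fin m | (∃ i, p.2 < i ∧ p.1 ∈ S i) ∧ 0 < p.1 ∧ p.1 ≤ mB S p.2}.ncard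

/-- rcb_B: pairs (s, S_j) with s ∈ S_i for some i < j and 0 < s ≤ M_j. -/
noncomputable def rcbB {m : ℕ} (S : Fin m → Finset ℤ) : ℕ :=
  {p : ℤ × Fin m | (∃ i < p.2, p.1 ∈ S i) ∧ 0 < p.1 ∧ p.1 ≤ MB S p.2}.ncard

/-- rob_B: pairs (s, S_j) with s ∈ S_i for some i < j and 0 < s ≤ m_j. -/
noncomputable def robB {m : ℕ} (S : Fin m → Finset ℤ) : ℕ :=
  {p : ℤ × Fin m | (∃ i < p.2, p.1 ∈ S i) ∧ 0 < p.1 ∧ p.1 ≤ mB S p.2}.ncard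

/-- rcs_B: pairs (s, S_j) with s ∈ S_i for some i < j and s ≥ M_j. -/
noncomputable def rcsB {m : ℕ} (S : Fin m → Finset ℤ) : ℕ :=
  {p : ℤ × Fin m | (∃ i < p.2, p.1 ∈ S i) ∧ MB S p.2 ≤ p.1}.ncard

/-- Type B Stirling numbers of the second kind. -/
def StirB : ℕ → ℕ → ℕ
  | 0, 0 => 1
  | 0, _+1 => 0
  | n+1, 0 => StirB n 0
  | n+1, k+1 => StirB n k + (2*(k+1)+1) * StirB n (k+1)

/-- [m] = 1 + q + ... + q^{m-1}. -/
noncomputable def qb (m : ℕ) : Polynomial ℤ := ∑ i ∈ Finset.range m, (Polynomial.X : Polynomial ℤ) ^ i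

/-- Type B q-Stirling numbers of the second kind. -/
noncomputable def qStirB : ℕ → ℕ → Polynomial ℤ
  | 0, 0 => 1
  | 0, _+1 => 0
  | n+1, 0 => qStirB n 0
  | n+1, k+1 => qStirB n k + qb (2*(k+1)+1) * qStirB n (k+1)

/-- [2k]!! = [2k][2k-2]⋯[2]. -/
noncomputable def qdf : ℕ → Polynomial ℤ
  | 0 => 1
  | k+1 => qb (2*(k+1)) * qdf k

/-- The complement map on ⟨n⟩: i ↦ n+1-i for i > 0, -i ↦ -(n+1-i), 0 ↦ 0. -/
def complB (n : ℕ) (x : ℤ) : ℤ :=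
  if 0 < x then (n : ℤ) + 1 - x else if x < 0 then -((n : ℤ) + 1) - x else 0

/-- Complement of a partition, blockwise. -/
def complP (n : ℕ) {m : ℕ} (S : Fin m → Finset ℤ) : Fin m → Finset ℤ :=
  fun j => (S j).image (complB n)

/-- The index of the block paired with block i: 0 ↦ 0, 2ℓ-1 ↦ 2ℓ, 2ℓ ↦ 2ℓ-1. -/
def pairIdx (k : ℕ) (i : Fin (2*k+1)) : Fin (2*k+1) :=
  if i.val = 0 then i
  else if h2 : i.val % 2 = 1 then ⟨i.val + 1, by omega⟩ else ⟨i.val - 1, by omega⟩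


/-! ### Auxiliary development -/

namespace Stmt4Aux

open Finset

lemma mem_angleB {n : ℕ} {x : ℤ} : x ∈ angleB n ↔ |x| ≤ (n : ℤ) := by
  simp [angleB, Finset.mem_Icc, abs_le, and_comm]

/-- min of absolute values of a finset. -/
noncomputable def mabs (s : Finset ℤ) : ℤ := WithTop.untopD 0 ((s.image (fun x => |x|)).min)

lemma mB_eq {m : ℕ} (S : Fin m → Finset ℤ) (j : Fin m) : mB S j = mabs (S j) := rfl

lemma mabs_eq_min' {s : Finset ℤ} (hs : s.Nonempty) :
    mabs s = (s.image (fun x => |x|)).min' (hs.image _) := by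
  rw [mabs, ← Finset.coe_min' (hs.image _), WithTop.untopD_coe]

lemma exists_abs_eq_mabs {s : Finset ℤ} (hs : s.Nonempty) : ∃ x ∈ s, |x| = mabs s := by
  rw [mabs_eq_min' hs]
  have := Finset.min'_mem (s.image (fun x => |x|)) (hs.image _)
  simpa using this

lemma mabs_le {s : Finset ℤ} {x : ℤ} (hx : x ∈ s) : mabs s ≤ |x| := by
  rw [mabs_eq_min' ⟨x, hx⟩]
  exact Finset.min'_le _ _ (Finset.mem_image_of_mem _ hx)

lemma mabs_nonneg {s : Finset ℤ} (hs : s.Nonempty) : 0 ≤ mabs s := by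
  obtain ⟨x, hx, he⟩ := exists_abs_eq_mabs hs
  rw [← he]; exact abs_nonneg x

lemma mabs_le_of_subset {s t : Finset ℤ} (ht : t.Nonempty) (hts : t ⊆ s) : mabs s ≤ mabs t := by
  obtain ⟨x, hx, he⟩ := exists_abs_eq_mabs ht
  rw [← he]; exact mabs_le (hts hx)

lemma mabs_eq_of_subset {s t : Finset ℤ} (hts : t ⊆ s)
    (h : ∃ x ∈ t, |x| = mabs s) : mabs t = mabs s := by
  obtain ⟨x, hx, he⟩ := h
  exact le_antisymm (he ▸ mabs_le hx) (mabs_le_of_subset ⟨x, hx⟩ hts)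

lemma mabs_insert {a x : ℤ} {s : Finset ℤ} (hx : x ∈ s) (hxa : |x| ≤ |a|) :
    mabs (insert a s) = mabs s := by
  refine le_antisymm (mabs_le_of_subset ⟨x, hx⟩ (Finset.subset_insert _ _)) ?_
  obtain ⟨y, hy, he⟩ := exists_abs_eq_mabs (Finset.insert_nonempty a s)
  rw [← he]
  rcases Finset.mem_insert.1 hy with rfl | hy
  · exact le_trans (mabs_le hx) hxa
  · exact mabs_le hy

lemma mabs_singleton (a : ℤ) : mabs {a} = |a| := by
  simp [mabs]

lemma mabs_le_coe {N : ℕ} {s : Finset ℤ} (hs : s.Nonempty) (h : s ⊆ angleB N) :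
    mabs s ≤ (N : ℤ) := by
  obtain ⟨x, hx, he⟩ := exists_abs_eq_mabs hs
  rw [← he]; exact mem_angleB.1 (h hx)

end Stmt4Aux

section PairIdx

lemma pairIdx_val {k : ℕ} (j : Fin (2*k+1)) :
    (pairIdx k j).val = if j.val = 0 then 0 else if j.val % 2 = 1 then j.val + 1 else j.val - 1 := by
  unfold pairIdx
  split_ifs with h1 h2 <;> simp_all

lemma pairIdx_of_val_zero {k : ℕ} {j : Fin (2*k+1)} (h : j.val = 0) : pairIdx k j = j := by
  unfold pairIdx; simp [h]

lemma pairIdx_odd {k : ℕ} {i : ℕ} (hi : 1 ≤ i) (h : 2*i < 2*k+1) :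
    pairIdx k ⟨2*i-1, by omega⟩ = ⟨2*i, h⟩ := by
  apply Fin.ext
  rw [pairIdx_val]
  have h1 : 2*i-1 ≠ 0 := by omega
  have h2 : (2*i-1) % 2 = 1 := by omega
  simp only [h1, h2, if_false, if_true]
  omega

lemma pairIdx_even {k : ℕ} {i : ℕ} (hi : 1 ≤ i) (h : 2*i < 2*k+1) :
    pairIdx k ⟨2*i, h⟩ = ⟨2*i-1, by omega⟩ := by
  apply Fin.ext
  rw [pairIdx_val]
  have h1 : 2*i ≠ 0 := by omega
  have h2 : ¬ ((2*i) % 2 = 1) := by omega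
  simp only [h1, h2, if_false]

lemma pairIdx_pairIdx {k : ℕ} (j : Fin (2*k+1)) : pairIdx k (pairIdx k j) = j := by
  rcases Nat.eq_zero_or_pos j.val with h0 | hpos
  · rw [pairIdx_of_val_zero h0, pairIdx_of_val_zero h0]
  rcases Nat.even_or_odd j.val with ⟨i, hi⟩ | ⟨i, hi⟩
  · -- j.val = 2*i, i ≥ 1
    have hik : 1 ≤ i := by omega
    have hlt : 2*i < 2*k+1 := by omega
    have hj : j = ⟨2*i, hlt⟩ := Fin.ext (by simp only [Fin.val_mk]; omega)
    rw [hj, pairIdx_even hik hlt, show (⟨2*i-1, by omega⟩ : Fin (2*k+1)) = ⟨2*(i)-1, by omega⟩ from rfl,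
      pairIdx_odd hik hlt]
  · -- j.val = 2*i+1 = 2*(i+1)-1
    have hlt : 2*(i+1) < 2*k+1 := by omega
    have hj : j = ⟨2*(i+1)-1, by omega⟩ := Fin.ext (by simp only [Fin.val_mk]; omega)
    rw [hj, pairIdx_odd (by omega) hlt, pairIdx_even (by omega) hlt]

lemma pairIdx_eq_iff {k : ℕ} {p j : Fin (2*k+1)} : pairIdx k p = j ↔ p = pairIdx k j := by
  constructor
  · rintro rfl; exact (pairIdx_pairIdx p).symm
  · rintro rfl; exact pairIdx_pairIdx j

end PairIdx

namespace Stmt4Aux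

section Ordered

variable {n k : ℕ} {S : Fin (2*k+1) → Finset ℤ}

lemma subset_angleB (hS : IsOrderedB n k S) (j : Fin (2*k+1)) : S j ⊆ angleB n := by
  intro x hx
  rw [← hS.2.2.1]
  exact Finset.mem_biUnion.2 ⟨j, Finset.mem_univ _, hx⟩

lemma exists_block (hS : IsOrderedB n k S) {x : ℤ} (hx : x ∈ angleB n) :
    ∃ j, x ∈ S j := by
  rw [← hS.2.2.1] at hx
  obtain ⟨j, -, hj⟩ := Finset.mem_biUnion.1 hx
  exact ⟨j, hj⟩

lemma block_eq_of_mem (hS : IsOrderedB n k S) {x : ℤ} {i j : Fin (2*k+1)}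
    (hi : x ∈ S i) (hj : x ∈ S j) : i = j := by
  by_contra h
  exact Finset.disjoint_left.1 (hS.2.1 i j h) hi hj

lemma neg_mem_pairIdx (hS : IsOrderedB n k S) {x : ℤ} {j : Fin (2*k+1)}
    (hx : x ∈ S j) : -x ∈ S (pairIdx k j) := by
  rcases Nat.eq_zero_or_pos j.val with h0 | hpos
  · rw [pairIdx_of_val_zero h0]
    have hj : j = 0 := Fin.ext (by simpa using h0)
    rw [hj] at hx ⊢
    exact hS.2.2.2.2.1 x hx
  rcases Nat.even_or_odd j.val with ⟨i, hi⟩ | ⟨i, hi⟩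
  · -- j.val = 2*i
    have hik : 1 ≤ i := by omega
    have hlt : 2*i < 2*k+1 := by omega
    have hj : j = ⟨2*i, hlt⟩ := Fin.ext (by simp only [Fin.val_mk]; omega)
    rw [hj] at hx ⊢
    rw [pairIdx_even hik hlt]
    have hpair := hS.2.2.2.2.2 i hik hlt
    rw [hpair] at hx
    obtain ⟨y, hy, rfl⟩ := Finset.mem_image.1 hx
    simpa using hy
  · -- j.val = 2*(i+1)-1
    have hlt : 2*(i+1) < 2*k+1 := by omega
    have hj : j = ⟨2*(i+1)-1, by omega⟩ := Fin.ext (by simp only [Fin.val_mk]; omega)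
    rw [hj] at hx ⊢
    rw [pairIdx_odd (by omega) hlt]
    have hpair := hS.2.2.2.2.2 (i+1) (by omega) hlt
    rw [hpair]
    exact Finset.mem_image_of_mem _ hx

lemma zero_mem_zero (hS : IsOrderedB n k S) : (0 : ℤ) ∈ S 0 := hS.2.2.2.1

end Ordered

/-- The set being summed over. -/
def PSet (n k : ℕ) : Set (Fin (2*k+1) → Finset ℤ) := {S | IsStandardB n k S}

lemma PSet_finite (n k : ℕ) : (PSet n k).Finite := by
  apply Set.Finite.subset
    (Set.Finite.pi' (fun _ : Fin (2*k+1) => (angleB n).powerset.finite_toSet))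
  intro S hS i
  exact Finset.mem_coe.2 (Finset.mem_powerset.2 (subset_angleB hS.1 i))

/-- The los set. -/
def losSet {m : ℕ} (S : Fin m → Finset ℤ) : Set (ℤ × Fin m) :=
  {p : ℤ × Fin m | (∃ i, p.2 < i ∧ p.1 ∈ S i) ∧ mB S p.2 ≤ p.1}

lemma losB'_eq {m : ℕ} (S : Fin m → Finset ℤ) : losB' S = (losSet S).ncard := rfl

lemma losSet_finite {m N : ℕ} {S : Fin m → Finset ℤ} (h : ∀ j, S j ⊆ angleB N) :
    (losSet S).Finite := by
  apply Set.Finite.subset (Set.Finite.prod (angleB N).finite_toSet (Set.finite_univ))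
  rintro ⟨s, j⟩ ⟨⟨i, -, hi⟩, -⟩
  exact ⟨h i hi, trivial⟩

end Stmt4Aux




namespace Stmt4Aux

lemma qStirB_zero (n : ℕ) : qStirB n 0 = 1 := by
  induction n with
  | zero => rfl
  | succ n ih => rw [qStirB, ih]

lemma PSet_n_zero (n : ℕ) : PSet n 0 = {fun _ => angleB n} := by
  ext S
  constructor
  · intro hS
    have hfin : ∀ j : Fin (2*0+1), j = 0 := fun j => Fin.ext (by omega)
    have : S 0 = angleB n := by
      rw [← hS.1.2.2.1]
      ext x
      simp only [Finset.mem_biUnion, Finset.mem_univ, true_and]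
      constructor
      · intro h; exact ⟨0, h⟩
      · rintro ⟨j, hj⟩; rwa [hfin j] at hj
    refine Set.mem_singleton_iff.2 (funext fun j => ?_)
    rw [hfin j, this]
  · intro hS
    rw [Set.mem_singleton_iff] at hS
    subst hS
    refine ⟨⟨?_, ?_, ?_, ?_, ?_, ?_⟩, ?_, ?_⟩
    · exact fun _ => ⟨0, mem_angleB.2 (by simp)⟩
    · intro i j hij
      exact absurd (Fin.ext (by omega) : i = j) hij
    · ext x
      simp only [Finset.mem_biUnion, Finset.mem_univ, true_and]
      constructor
      · rintro ⟨j, hj⟩; exact hj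
      · intro h; exact ⟨0, h⟩
    · exact mem_angleB.2 (by simp)
    · intro x hx
      rw [mem_angleB] at hx ⊢
      simpa using hx
    · intro i hi h; omega
    · intro i hi h; omega
    · intro i h; omega

lemma losB'_k_zero (S : Fin (2*0+1) → Finset ℤ) : losB' S = 0 := by
  rw [losB'_eq]
  have h : losSet S = ∅ := by
    ext ⟨s, j⟩
    simp only [losSet, Set.mem_setOf_eq, Set.mem_empty_iff_false, iff_false, not_and]
    rintro ⟨i, hji, -⟩
    exact absurd (Fin.ext (by omega) : j = i) (ne_of_lt hji)
  rw [h, Set.ncard_empty]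

lemma stmt4_k_zero (n : ℕ) :
    (Polynomial.X : Polynomial ℤ) ^ (0*(0+1)) * qStirB n 0 =
      ∑ᶠ S ∈ {S : Fin (2*0+1) → Finset ℤ | IsStandardB n 0 S},
        (Polynomial.X : Polynomial ℤ) ^ losB' S := by
  have h : {S : Fin (2*0+1) → Finset ℤ | IsStandardB n 0 S} = PSet n 0 := rfl
  rw [h, PSet_n_zero, finsum_mem_singleton, losB'_k_zero, qStirB_zero]
  simp

lemma PSet_zero_succ (k : ℕ) : PSet 0 (k+1) = ∅ := by
  ext S
  simp only [Set.mem_empty_iff_false, iff_false]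
  intro hS
  obtain ⟨x, hx⟩ := hS.1.1 1
  have hx0 : x = 0 := by
    have := subset_angleB hS.1 1 hx
    rw [mem_angleB] at this
    exact abs_eq_zero.mp (le_antisymm (by simpa using this) (abs_nonneg x))
  subst hx0
  have h0 : (0:ℤ) ∈ S 0 := zero_mem_zero hS.1
  have h1 : (1 : Fin (2*(k+1)+1)) ≠ 0 := by
    intro h
    have := congrArg Fin.val h
    simp [Fin.val_one] at this
  exact absurd (block_eq_of_mem hS.1 hx h0) h1

end Stmt4Aux


namespace Stmt4Aux

/-- Insert `n+1` into block `p` and `-(n+1)` into block `pairIdx k p`. -/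
def insB (n : ℕ) {k : ℕ} (p : Fin (2*k+1)) (ρ : Fin (2*k+1) → Finset ℤ) :
    Fin (2*k+1) → Finset ℤ := fun j =>
  if j = p then
    (if j = pairIdx k p then insert (-((n:ℤ)+1)) (insert ((n:ℤ)+1) (ρ j))
     else insert ((n:ℤ)+1) (ρ j))
  else if j = pairIdx k p then insert (-((n:ℤ)+1)) (ρ j) else ρ j

/-- Delete `±(n+1)` from every block. -/
def delB (n : ℕ) {m : ℕ} (S : Fin m → Finset ℤ) : Fin m → Finset ℤ :=
  fun j => ((S j).erase ((n:ℤ)+1)).erase (-((n:ℤ)+1))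

lemma mem_insB {n k : ℕ} {p j : Fin (2*k+1)} {ρ : Fin (2*k+1) → Finset ℤ} {x : ℤ} :
    x ∈ insB n p ρ j ↔
      x ∈ ρ j ∨ (x = (n:ℤ)+1 ∧ j = p) ∨ (x = -((n:ℤ)+1) ∧ j = pairIdx k p) := by
  unfold insB
  split_ifs with h1 h2 h3 <;> simp_all [Finset.mem_insert] <;> tauto

lemma mem_delB {n m : ℕ} {S : Fin m → Finset ℤ} {j : Fin m} {x : ℤ} :
    x ∈ delB n S j ↔ x ∈ S j ∧ x ≠ (n:ℤ)+1 ∧ x ≠ -((n:ℤ)+1) := by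
  simp only [delB, Finset.mem_erase]
  tauto

section Ins

variable {n k : ℕ} {ρ : Fin (2*k+1) → Finset ℤ} {p : Fin (2*k+1)}

lemma abs_le_of_standard (hρ : IsStandardB n k ρ) {j : Fin (2*k+1)} {x : ℤ}
    (hx : x ∈ ρ j) : |x| ≤ (n:ℤ) :=
  mem_angleB.1 (subset_angleB hρ.1 j hx)

lemma ne_of_standard (hρ : IsStandardB n k ρ) {j : Fin (2*k+1)} {x : ℤ}
    (hx : x ∈ ρ j) : x ≠ (n:ℤ)+1 ∧ x ≠ -((n:ℤ)+1) := by
  have h := abs_le_of_standard hρ hx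
  rcases abs_cases x with ⟨h1, h2⟩ | ⟨h1, h2⟩ <;> constructor <;> rintro rfl <;> omega

lemma mB_insB (hρ : IsStandardB n k ρ) (j : Fin (2*k+1)) :
    mB (insB n p ρ) j = mB ρ j := by
  rw [mB_eq, mB_eq]
  obtain ⟨x, hx⟩ := hρ.1.1 j
  have hxa : |x| ≤ (n:ℤ) := abs_le_of_standard hρ hx
  have ha1 : |x| ≤ |((n:ℤ)+1)| := by rw [abs_of_nonneg (by omega : (0:ℤ) ≤ (n:ℤ)+1)]; omega
  have ha2 : |x| ≤ |(-((n:ℤ)+1))| := by rw [abs_neg, abs_of_nonneg (by omega : (0:ℤ) ≤ (n:ℤ)+1)]; omega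
  show mabs (insB n p ρ j) = mabs (ρ j)
  unfold insB
  split_ifs with h1 h2 h3
  · rw [mabs_insert (Finset.mem_insert_of_mem hx) ha2, mabs_insert hx ha1]
  · rw [mabs_insert hx ha1]
  · rw [mabs_insert hx ha2]
  · rfl

lemma insB_standard (hρ : IsStandardB n k ρ) (p : Fin (2*k+1)) :
    IsStandardB (n+1) k (insB n p ρ) := by
  have hne := hρ.1.1
  refine ⟨⟨?_, ?_, ?_, ?_, ?_, ?_⟩, ?_, ?_⟩
  · intro j
    obtain ⟨x, hx⟩ := hne j
    exact ⟨x, mem_insB.2 (Or.inl hx)⟩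
  · intro i j hij
    rw [Finset.disjoint_left]
    intro x hxi hxj
    rcases mem_insB.1 hxi with hx1 | ⟨he1, hp1⟩ | ⟨he1, hp1⟩ <;>
      rcases mem_insB.1 hxj with hx2 | ⟨he2, hp2⟩ | ⟨he2, hp2⟩
    · exact hij (block_eq_of_mem hρ.1 hx1 hx2)
    · exact (ne_of_standard hρ hx1).1 he2
    · exact (ne_of_standard hρ hx1).2 he2
    · exact (ne_of_standard hρ hx2).1 he1
    · exact hij (hp1.trans hp2.symm)
    · subst he1; omega
    · exact (ne_of_standard hρ hx2).2 he1
    · subst he1; omega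
    · exact hij (hp1.trans hp2.symm)
  · ext x
    simp only [Finset.mem_biUnion, Finset.mem_univ, true_and]
    constructor
    · rintro ⟨j, hj⟩
      rcases mem_insB.1 hj with hx | ⟨rfl, -⟩ | ⟨rfl, -⟩
      · have := abs_le_of_standard hρ hx
        rw [mem_angleB]; push_cast; omega
      · rw [mem_angleB]; push_cast
        rw [abs_of_nonneg (by positivity)]
      · rw [mem_angleB]; push_cast
        rw [abs_neg, abs_of_nonneg (by positivity)]
    · intro hx
      have hxa := mem_angleB.1 hx
      push_cast at hxa
      by_cases hxn : |x| ≤ (n:ℤ)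
      · obtain ⟨j, hj⟩ := exists_block hρ.1 (mem_angleB.2 hxn)
        exact ⟨j, mem_insB.2 (Or.inl hj)⟩
      · have hx2 : x = (n:ℤ)+1 ∨ x = -((n:ℤ)+1) := by
          rcases abs_cases x with ⟨h1, -⟩ | ⟨h1, -⟩ <;> omega
        rcases hx2 with rfl | rfl
        · exact ⟨p, mem_insB.2 (Or.inr (Or.inl ⟨rfl, rfl⟩))⟩
        · exact ⟨pairIdx k p, mem_insB.2 (Or.inr (Or.inr ⟨rfl, rfl⟩))⟩
  · exact mem_insB.2 (Or.inl (zero_mem_zero hρ.1))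
  · intro x hx
    rcases mem_insB.1 hx with hx1 | ⟨rfl, hp1⟩ | ⟨rfl, hp1⟩
    · exact mem_insB.2 (Or.inl (hρ.1.2.2.2.2.1 x hx1))
    · refine mem_insB.2 (Or.inr (Or.inr ⟨rfl, ?_⟩))
      rw [← hp1, pairIdx_of_val_zero (by simp), hp1]
    · refine mem_insB.2 (Or.inr (Or.inl ⟨by ring, ?_⟩))
      have h0 : p = pairIdx k 0 := pairIdx_eq_iff.1 hp1.symm
      rw [h0, pairIdx_of_val_zero (by simp)]
  · intro i hi h
    have hpair := hρ.1.2.2.2.2.2 i hi h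
    have hold : ∀ y : ℤ, y ∈ ρ ⟨2*i, h⟩ ↔ -y ∈ ρ ⟨2*i-1, by omega⟩ := by
      intro y
      rw [hpair]
      simp only [Finset.mem_image]
      constructor
      · rintro ⟨z, hz, rfl⟩; rwa [neg_neg]
      · intro hy; exact ⟨-y, hy, neg_neg y⟩
    have hidx1 : (⟨2*i, h⟩ : Fin (2*k+1)) = p ↔ (⟨2*i-1, by omega⟩ : Fin (2*k+1)) = pairIdx k p := by
      constructor
      · rintro rfl; exact (pairIdx_even hi h).symm
      · intro he
        rw [pairIdx_eq_iff.1 he.symm, pairIdx_odd hi h]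
    have hidx2 : (⟨2*i, h⟩ : Fin (2*k+1)) = pairIdx k p ↔ (⟨2*i-1, by omega⟩ : Fin (2*k+1)) = p := by
      constructor
      · intro he
        rw [pairIdx_eq_iff.1 he.symm, pairIdx_even hi h]
      · rintro rfl; exact (pairIdx_odd hi h).symm
    ext y
    simp only [Finset.mem_image]
    constructor
    · intro hy
      refine ⟨-y, ?_, neg_neg y⟩
      rcases mem_insB.1 hy with hy1 | ⟨rfl, hp1⟩ | ⟨rfl, hp1⟩
      · exact mem_insB.2 (Or.inl ((hold y).1 hy1))
      · exact mem_insB.2 (Or.inr (Or.inr ⟨by ring, hidx1.1 hp1⟩))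
      · exact mem_insB.2 (Or.inr (Or.inl ⟨by ring, hidx2.1 hp1⟩))
    · rintro ⟨z, hz, rfl⟩
      rcases mem_insB.1 hz with hz1 | ⟨rfl, hp1⟩ | ⟨rfl, hp1⟩
      · refine mem_insB.2 (Or.inl ?_)
        rw [hold]
        rwa [neg_neg]
      · exact mem_insB.2 (Or.inr (Or.inr ⟨by ring, hidx2.2 hp1⟩))
      · exact mem_insB.2 (Or.inr (Or.inl ⟨by ring, hidx1.2 hp1⟩))
  · intro i hi h
    rw [mB_insB hρ]
    exact mem_insB.2 (Or.inl (hρ.2.1 i hi h))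
  · intro i h
    rw [mB_insB hρ, mB_insB hρ]
    exact hρ.2.2 i h

end Ins

end Stmt4Aux


namespace Stmt4Aux

section Ins2

variable {n k : ℕ} {ρ : Fin (2*k+1) → Finset ℤ} {p : Fin (2*k+1)}

lemma losB'_insB (hρ : IsStandardB n k ρ) (p : Fin (2*k+1)) :
    losB' (insB n p ρ) = losB' ρ + p.val := by
  have hsub := subset_angleB hρ.1
  have hne := hρ.1.1
  have hset : losSet (insB n p ρ) =
      losSet ρ ∪ (fun j => (((n:ℤ)+1), j)) '' {j : Fin (2*k+1) | j < p} := by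
    ext ⟨s, j⟩
    simp only [losSet, Set.mem_setOf_eq, Set.mem_union, Set.mem_image]
    constructor
    · rintro ⟨⟨i, hji, hsi⟩, hm⟩
      rw [mB_insB hρ] at hm
      rcases mem_insB.1 hsi with hs | ⟨rfl, rfl⟩ | ⟨rfl, rfl⟩
      · exact Or.inl ⟨⟨i, hji, hs⟩, hm⟩
      · exact Or.inr ⟨j, hji, rfl⟩
      · exfalso
        have h2 : mabs (ρ j) ≤ -((n:ℤ)+1) := hm
        have := mabs_nonneg (hne j)
        omega
    · rintro (⟨⟨i, hji, hsi⟩, hm⟩ | ⟨j', hj', he⟩)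
      · exact ⟨⟨i, hji, mem_insB.2 (Or.inl hsi)⟩, by rw [mB_insB hρ]; exact hm⟩
      · obtain ⟨rfl, rfl⟩ : (n:ℤ)+1 = s ∧ j' = j := by
          constructor
          · exact congrArg Prod.fst he
          · exact congrArg Prod.snd he
        refine ⟨⟨p, hj', mem_insB.2 (Or.inr (Or.inl ⟨rfl, rfl⟩))⟩, ?_⟩
        show mB (insB n p ρ) j' ≤ (n:ℤ)+1
        rw [mB_insB hρ, mB_eq]
        have := mabs_le_coe (hne j') (hsub j')
        omega
  have hdisj : Disjoint (losSet ρ)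
      ((fun j => (((n:ℤ)+1), j)) '' {j : Fin (2*k+1) | j < p}) := by
    rw [Set.disjoint_left]
    rintro ⟨s, j⟩ ⟨⟨i, -, hsi⟩, -⟩ ⟨j', -, he⟩
    have hs : (n:ℤ)+1 = s := congrArg Prod.fst he
    have h2 : |s| ≤ (n:ℤ) := abs_le_of_standard hρ hsi
    have h3 := abs_nonneg s
    rcases abs_cases s with ⟨h1, -⟩ | ⟨h1, -⟩ <;> omega
  have hinj : Function.Injective (fun j : Fin (2*k+1) => (((n:ℤ)+1), j)) := by
    intro a b h
    exact congrArg Prod.snd h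
  rw [losB'_eq, losB'_eq, hset,
    Set.ncard_union_eq hdisj (losSet_finite hsub) ((Set.toFinite _).image _),
    Set.ncard_image_of_injective _ hinj]
  congr 1
  rw [show {j : Fin (2*k+1) | j < p} = ↑(Finset.Iio p) by ext j; simp,
    Set.ncard_coe_finset, Fin.card_Iio]

lemma delB_insB (hρ : IsStandardB n k ρ) : delB n (insB n p ρ) = ρ := by
  funext j
  ext x
  rw [mem_delB, mem_insB]
  constructor
  · rintro ⟨hx | ⟨rfl, -⟩ | ⟨rfl, -⟩, hx1, hx2⟩
    · exact hx
    · exact absurd rfl hx1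
    · exact absurd rfl hx2
  · intro hx
    exact ⟨Or.inl hx, (ne_of_standard hρ hx).1, (ne_of_standard hρ hx).2⟩

lemma insB_last_ne (hρ : IsStandardB n k ρ) (p : Fin (2*k+1)) :
    insB n p ρ ⟨2*k, by omega⟩ ≠ {((n:ℤ)+1)} := by
  intro h
  obtain ⟨x, hx⟩ := hρ.1.1 ⟨2*k, by omega⟩
  have hx' : x ∈ insB n p ρ ⟨2*k, by omega⟩ := mem_insB.2 (Or.inl hx)
  rw [h, Finset.mem_singleton] at hx'
  exact (ne_of_standard hρ hx).1 hx'

end Ins2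

section Del

variable {n k : ℕ} {S : Fin (2*k+1) → Finset ℤ} {p : Fin (2*k+1)}

lemma crucial (hS : IsStandardB (n+1) k S) (hp : ((n:ℤ)+1) ∈ S p)
    (hlast : S ⟨2*k, by omega⟩ ≠ {((n:ℤ)+1)}) :
    ∃ x ∈ S p, x ≠ (n:ℤ)+1 ∧ x ≠ -((n:ℤ)+1) := by
  by_contra hcon
  push_neg at hcon
  have hp0 : p.val ≠ 0 := by
    intro h0
    have hzp : (0:ℤ) ∈ S p := by
      have h1 := zero_mem_zero hS.1
      have : p = 0 := Fin.ext (by simpa using h0)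
      rwa [this]
    have := hcon 0 hzp (by omega)
    omega
  have hneg : -((n:ℤ)+1) ∉ S p := by
    intro hmem
    have h2 := neg_mem_pairIdx hS.1 hp
    have h3 := block_eq_of_mem hS.1 hmem h2
    have hv := congrArg Fin.val h3
    rw [pairIdx_val] at hv
    split_ifs at hv <;> omega
  have hSp : S p = {((n:ℤ)+1)} := by
    ext y
    simp only [Finset.mem_singleton]
    constructor
    · intro hy
      by_contra hne'
      exact hneg ((hcon y hy hne') ▸ hy)
    · rintro rfl; exact hp
  have hmabs : mB S p = (n:ℤ)+1 := by
    rw [mB_eq, hSp, mabs_singleton, abs_of_nonneg (by omega : (0:ℤ) ≤ (n:ℤ)+1)]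
  rcases Nat.even_or_odd p.val with ⟨i, hi⟩ | ⟨i, hi⟩
  · have hik : 1 ≤ i := by omega
    have hlt : 2*i < 2*k+1 := by omega
    have hpe : p = ⟨2*i, hlt⟩ := Fin.ext (by simp only [Fin.val_mk]; omega)
    by_cases hik2 : 2*(i+1) < 2*k+1
    · have hinc := hS.2.2 i hik2
      have hle : mB S ⟨2*(i+1), hik2⟩ ≤ ((n:ℤ)+1) := by
        rw [mB_eq]
        have := mabs_le_coe (hS.1.1 ⟨2*(i+1), hik2⟩) (subset_angleB hS.1 _)
        push_cast at this
        omega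
      rw [← hpe] at hinc
      rw [hmabs] at hinc
      omega
    · have hpl : p = ⟨2*k, by omega⟩ := Fin.ext (by simp only [Fin.val_mk]; omega)
      exact hlast (hpl ▸ hSp)
  · have hlt : 2*(i+1) < 2*k+1 := by omega
    have hpe : p = ⟨2*(i+1)-1, by omega⟩ := Fin.ext (by simp only [Fin.val_mk]; omega)
    have hpair := hS.1.2.2.2.2.2 (i+1) (by omega) hlt
    have hS2 : S ⟨2*(i+1), hlt⟩ = {-((n:ℤ)+1)} := by
      rw [hpair, ← hpe, hSp]
      rfl
    have hm2 := hS.2.1 (i+1) (by omega) hlt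
    rw [hS2, Finset.mem_singleton, mB_eq, hS2, mabs_singleton, abs_neg,
      abs_of_nonneg (by omega : (0:ℤ) ≤ (n:ℤ)+1)] at hm2
    omega

lemma told_spec (hS : IsStandardB (n+1) k S) (hp : ((n:ℤ)+1) ∈ S p)
    (hlast : S ⟨2*k, by omega⟩ ≠ {((n:ℤ)+1)}) :
    delB n S ∈ PSet n k ∧ insB n p (delB n S) = S := by
  obtain ⟨x₀, hx₀S, hx₀1, hx₀2⟩ := crucial hS hp hlast
  have hu1 : ∀ (j : Fin (2*k+1)) (y : ℤ), y ∈ S j → y = (n:ℤ)+1 → j = p := by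
    rintro j y hy rfl
    exact block_eq_of_mem hS.1 hy hp
  have hneg : -((n:ℤ)+1) ∈ S (pairIdx k p) := neg_mem_pairIdx hS.1 hp
  have hu2 : ∀ (j : Fin (2*k+1)) (y : ℤ), y ∈ S j → y = -((n:ℤ)+1) → j = pairIdx k p := by
    rintro j y hy rfl
    exact block_eq_of_mem hS.1 hy hneg
  have hdelne : ∀ j, (delB n S j).Nonempty := by
    intro j
    by_cases hjp : j = p
    · exact ⟨x₀, mem_delB.2 ⟨hjp ▸ hx₀S, hx₀1, hx₀2⟩⟩
    by_cases hjq : j = pairIdx k p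
    · refine ⟨-x₀, mem_delB.2 ⟨hjq ▸ neg_mem_pairIdx hS.1 hx₀S, ?_, ?_⟩⟩
      · intro h; exact hx₀2 (by omega)
      · intro h; exact hx₀1 (by omega)
    · obtain ⟨y, hy⟩ := hS.1.1 j
      refine ⟨y, mem_delB.2 ⟨hy, ?_, ?_⟩⟩
      · intro h; exact hjp (hu1 j y hy h)
      · intro h; exact hjq (hu2 j y hy h)
  have hmabs_le : ∀ j, mB S j ≤ (n:ℤ) := by
    intro j
    obtain ⟨z, hz⟩ := hdelne j
    rw [mem_delB] at hz
    obtain ⟨hz1, hz2, hz3⟩ := hz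
    have hza := mem_angleB.1 (subset_angleB hS.1 j hz1)
    push_cast at hza
    have : |z| ≤ (n:ℤ) := by
      rcases abs_cases z with ⟨h1, -⟩ | ⟨h1, -⟩ <;> omega
    rw [mB_eq]
    exact le_trans (mabs_le hz1) this
  have hmB_del : ∀ j, mB (delB n S) j = mB S j := by
    intro j
    rw [mB_eq, mB_eq]
    apply mabs_eq_of_subset
    · intro y hy
      exact (mem_delB.1 hy).1
    · obtain ⟨y, hy, hye⟩ := exists_abs_eq_mabs (hS.1.1 j)
      have hyn : mabs (S j) ≤ (n:ℤ) := hmabs_le j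
      refine ⟨y, mem_delB.2 ⟨hy, ?_, ?_⟩, hye⟩
      · rintro rfl
        rw [abs_of_nonneg (by omega : (0:ℤ) ≤ (n:ℤ)+1)] at hye
        omega
      · rintro rfl
        rw [abs_neg, abs_of_nonneg (by omega : (0:ℤ) ≤ (n:ℤ)+1)] at hye
        omega
  constructor
  · refine ⟨⟨hdelne, ?_, ?_, ?_, ?_, ?_⟩, ?_, ?_⟩
    · intro i j hij
      exact Finset.disjoint_of_subset_left (fun y hy => (mem_delB.1 hy).1)
        (Finset.disjoint_of_subset_right (fun y hy => (mem_delB.1 hy).1) (hS.1.2.1 i j hij))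
    · ext y
      simp only [Finset.mem_biUnion, Finset.mem_univ, true_and]
      constructor
      · rintro ⟨j, hj⟩
        obtain ⟨hy1, hy2, hy3⟩ := mem_delB.1 hj
        have hya := mem_angleB.1 (subset_angleB hS.1 j hy1)
        push_cast at hya
        rw [mem_angleB]
        rcases abs_cases y with ⟨h1, -⟩ | ⟨h1, -⟩ <;> omega
      · intro hy
        have hya := mem_angleB.1 hy
        have hy' : y ∈ angleB (n+1) := by
          rw [mem_angleB]; push_cast; omega
        obtain ⟨j, hj⟩ := exists_block hS.1 hy'
        refine ⟨j, mem_delB.2 ⟨hj, ?_, ?_⟩⟩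
        · rintro rfl
          rw [abs_of_nonneg (by omega : (0:ℤ) ≤ (n:ℤ)+1)] at hya
          omega
        · rintro rfl
          rw [abs_neg, abs_of_nonneg (by omega : (0:ℤ) ≤ (n:ℤ)+1)] at hya
          omega
    · exact mem_delB.2 ⟨zero_mem_zero hS.1, by omega, by omega⟩
    · intro x hx
      obtain ⟨hx1, hx2, hx3⟩ := mem_delB.1 hx
      refine mem_delB.2 ⟨hS.1.2.2.2.2.1 x hx1, ?_, ?_⟩
      · intro h; exact hx3 (by omega)
      · intro h; exact hx2 (by omega)
    · intro i hi h
      have hpair := hS.1.2.2.2.2.2 i hi h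
      ext y
      rw [mem_delB, Finset.mem_image]
      constructor
      · rintro ⟨hy1, hy2, hy3⟩
        rw [hpair, Finset.mem_image] at hy1
        obtain ⟨z, hz, rfl⟩ := hy1
        refine ⟨z, mem_delB.2 ⟨hz, ?_, ?_⟩, rfl⟩
        · intro h'; exact hy3 (by omega)
        · intro h'; exact hy2 (by omega)
      · rintro ⟨z, hz, rfl⟩
        obtain ⟨hz1, hz2, hz3⟩ := mem_delB.1 hz
        refine ⟨by rw [hpair]; exact Finset.mem_image_of_mem _ hz1, ?_, ?_⟩
        · intro h'; exact hz3 (by omega)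
        · intro h'; exact hz2 (by omega)
    · intro i hi h
      rw [hmB_del]
      have hm := hS.2.1 i hi h
      refine mem_delB.2 ⟨hm, ?_, ?_⟩
      · have := hmabs_le ⟨2*i, h⟩
        intro h'; omega
      · have := mabs_nonneg (hS.1.1 ⟨2*i, h⟩)
        rw [← mB_eq] at this
        intro h'; omega
    · intro i h
      rw [hmB_del, hmB_del]
      exact hS.2.2 i h
  · funext j
    ext y
    rw [mem_insB, mem_delB]
    constructor
    · rintro (⟨hy, -, -⟩ | ⟨rfl, rfl⟩ | ⟨rfl, rfl⟩)
      · exact hy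
      · exact hp
      · exact hneg
    · intro hy
      by_cases h1 : y = (n:ℤ)+1
      · exact Or.inr (Or.inl ⟨h1, hu1 j y hy h1⟩)
      by_cases h2 : y = -((n:ℤ)+1)
      · exact Or.inr (Or.inr ⟨h2, hu2 j y hy h2⟩)
      · exact Or.inl ⟨hy, h1, h2⟩

end Del

end Stmt4Aux


namespace Stmt4Aux

/-- Extend a partition with the new pair of blocks {-(n+1)}, {n+1}. -/
def extB (n k : ℕ) (ρ : Fin (2*k+1) → Finset ℤ) : Fin (2*(k+1)+1) → Finset ℤ :=
  fun j => if h : j.val < 2*k+1 then ρ ⟨j.val, h⟩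
    else if j.val = 2*k+1 then {-((n:ℤ)+1)} else {((n:ℤ)+1)}

section Ext

variable {n k : ℕ} {ρ : Fin (2*k+1) → Finset ℤ}

lemma extB_lt {j : Fin (2*(k+1)+1)} (h : j.val < 2*k+1) :
    extB n k ρ j = ρ ⟨j.val, h⟩ := by
  unfold extB; rw [dif_pos h]

lemma extB_mid {j : Fin (2*(k+1)+1)} (h : j.val = 2*k+1) :
    extB n k ρ j = {-((n:ℤ)+1)} := by
  unfold extB; rw [dif_neg (by omega), if_pos h]

lemma extB_top {j : Fin (2*(k+1)+1)} (h : j.val = 2*k+2) :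
    extB n k ρ j = {((n:ℤ)+1)} := by
  unfold extB; rw [dif_neg (by omega), if_neg (by omega)]

lemma extB_cases (j : Fin (2*(k+1)+1)) :
    (∃ h : j.val < 2*k+1, extB n k ρ j = ρ ⟨j.val, h⟩) ∨
    (j.val = 2*k+1 ∧ extB n k ρ j = {-((n:ℤ)+1)}) ∨
    (j.val = 2*k+2 ∧ extB n k ρ j = {((n:ℤ)+1)}) := by
  by_cases h1 : j.val < 2*k+1
  · exact Or.inl ⟨h1, extB_lt h1⟩
  by_cases h2 : j.val = 2*k+1
  · exact Or.inr (Or.inl ⟨h2, extB_mid h2⟩)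
  · have h3 : j.val = 2*k+2 := by omega
    exact Or.inr (Or.inr ⟨h3, extB_top h3⟩)

lemma extB_standard (hρ : IsStandardB n k ρ) : IsStandardB (n+1) (k+1) (extB n k ρ) := by
  have hsub := subset_angleB hρ.1
  have hne := hρ.1.1
  have habs : ∀ (j : Fin (2*k+1)) (x : ℤ), x ∈ ρ j → |x| ≤ (n:ℤ) := by
    intro j x hx
    exact mem_angleB.1 (hsub j hx)
  refine ⟨⟨?_, ?_, ?_, ?_, ?_, ?_⟩, ?_, ?_⟩
  · intro j
    rcases extB_cases (ρ := ρ) (n := n) j with ⟨h, hval⟩ | ⟨h, hval⟩ | ⟨h, hval⟩ <;> rw [hval]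
    · exact hne _
    · exact ⟨_, Finset.mem_singleton_self _⟩
    · exact ⟨_, Finset.mem_singleton_self _⟩
  · intro i j hij
    rw [Finset.disjoint_left]
    intro x hxi hxj
    rcases extB_cases (ρ := ρ) (n := n) i with ⟨h1, hv1⟩ | ⟨h1, hv1⟩ | ⟨h1, hv1⟩ <;>
      rcases extB_cases (ρ := ρ) (n := n) j with ⟨h2, hv2⟩ | ⟨h2, hv2⟩ | ⟨h2, hv2⟩ <;>
      rw [hv1] at hxi <;> rw [hv2] at hxj <;>
      try rw [Finset.mem_singleton] at hxi
    all_goals try rw [Finset.mem_singleton] at hxj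
    · refine absurd (block_eq_of_mem hρ.1 hxi hxj) ?_
      intro he
      have hv : i.val = j.val := by
        have := congrArg Fin.val he
        simpa using this
      exact hij (Fin.ext hv)
    · have := habs _ _ hxi; subst hxj
      rw [abs_neg, abs_of_nonneg (by omega : (0:ℤ) ≤ (n:ℤ)+1)] at this; omega
    · have := habs _ _ hxi; subst hxj
      rw [abs_of_nonneg (by omega : (0:ℤ) ≤ (n:ℤ)+1)] at this; omega
    · have := habs _ _ hxj; subst hxi
      rw [abs_neg, abs_of_nonneg (by omega : (0:ℤ) ≤ (n:ℤ)+1)] at this; omega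
    · exact hij (Fin.ext (by omega))
    · omega
    · have := habs _ _ hxj; subst hxi
      rw [abs_of_nonneg (by omega : (0:ℤ) ≤ (n:ℤ)+1)] at this; omega
    · omega
    · exact hij (Fin.ext (by omega))
  · ext x
    simp only [Finset.mem_biUnion, Finset.mem_univ, true_and]
    constructor
    · rintro ⟨j, hj⟩
      rcases extB_cases (ρ := ρ) (n := n) j with ⟨h, hval⟩ | ⟨h, hval⟩ | ⟨h, hval⟩ <;>
        rw [hval] at hj
      · have := habs _ _ hj
        rw [mem_angleB]; push_cast; omega
      · rw [Finset.mem_singleton] at hj; subst hj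
        rw [mem_angleB, abs_neg, abs_of_nonneg (by omega : (0:ℤ) ≤ (n:ℤ)+1)]; push_cast; omega
      · rw [Finset.mem_singleton] at hj; subst hj
        rw [mem_angleB, abs_of_nonneg (by omega : (0:ℤ) ≤ (n:ℤ)+1)]; push_cast; omega
    · intro hx
      have hxa := mem_angleB.1 hx
      push_cast at hxa
      by_cases hxn : |x| ≤ (n:ℤ)
      · obtain ⟨j, hj⟩ := exists_block hρ.1 (mem_angleB.2 hxn)
        refine ⟨Fin.castLE (by omega) j, ?_⟩
        rw [extB_lt (by simpa using j.isLt)]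
        convert hj using 2
        exact Fin.ext (by simp)
      · have hx2 : x = (n:ℤ)+1 ∨ x = -((n:ℤ)+1) := by
          rcases abs_cases x with ⟨h1, -⟩ | ⟨h1, -⟩ <;> omega
        rcases hx2 with rfl | rfl
        · exact ⟨⟨2*k+2, by omega⟩, by rw [extB_top rfl]; exact Finset.mem_singleton_self _⟩
        · exact ⟨⟨2*k+1, by omega⟩, by rw [extB_mid rfl]; exact Finset.mem_singleton_self _⟩
  · rw [extB_lt (by simp)]
    have : (⟨(0 : Fin (2*(k+1)+1)).val, by simp⟩ : Fin (2*k+1)) = 0 := Fin.ext (by simp)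
    rw [this]
    exact zero_mem_zero hρ.1
  · intro x hx
    rw [extB_lt (by simp)] at hx ⊢
    have h0 : (⟨(0 : Fin (2*(k+1)+1)).val, by simp⟩ : Fin (2*k+1)) = 0 := Fin.ext (by simp)
    rw [h0] at hx ⊢
    exact hρ.1.2.2.2.2.1 x hx
  · intro i hi h
    by_cases hik : 2*i < 2*k+1
    · rw [extB_lt (j := ⟨2*i, h⟩) hik, extB_lt (j := ⟨2*i-1, by omega⟩) (by simp only [Fin.val_mk]; omega)]
      exact hρ.1.2.2.2.2.2 i hi hik
    · have h2 : 2*i = 2*k+2 := by omega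
      rw [extB_top (j := ⟨2*i, h⟩) h2, extB_mid (j := ⟨2*i-1, by omega⟩) (by simp only [Fin.val_mk]; omega)]
      simp
  · intro i hi h
    by_cases hik : 2*i < 2*k+1
    · rw [mB_eq, extB_lt (j := ⟨2*i, h⟩) hik, ← mB_eq]
      exact hρ.2.1 i hi hik
    · have h2 : 2*i = 2*k+2 := by omega
      rw [mB_eq, extB_top (j := ⟨2*i, h⟩) h2, mabs_singleton,
        abs_of_nonneg (by omega : (0:ℤ) ≤ (n:ℤ)+1)]
      exact Finset.mem_singleton_self _
  · intro i h
    by_cases hik : 2*(i+1) < 2*k+1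
    · rw [mB_eq, mB_eq, extB_lt (by simp only [Fin.val_mk]; omega), extB_lt (j := ⟨2*(i+1), h⟩) hik]
      exact hρ.2.2 i hik
    · have h2 : 2*(i+1) = 2*k+2 := by omega
      have hik2 : 2*i < 2*k+1 := by omega
      rw [mB_eq, mB_eq, extB_lt (j := ⟨2*i, by omega⟩) (by simp only [Fin.val_mk]; omega),
        extB_top (j := ⟨2*(i+1), h⟩) h2, mabs_singleton,
        abs_of_nonneg (by omega : (0:ℤ) ≤ (n:ℤ)+1)]
      have := mabs_le_coe (hne ⟨2*i, hik2⟩) (hsub ⟨2*i, hik2⟩)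
      have he : (⟨(⟨2*i, by omega⟩ : Fin (2*(k+1)+1)).val, by simp only [Fin.val_mk]; omega⟩ : Fin (2*k+1)) = ⟨2*i, hik2⟩ := Fin.ext rfl
      rw [he]
      omega

end Ext

end Stmt4Aux


namespace Stmt4Aux

section Ext2

variable {n k : ℕ} {ρ : Fin (2*k+1) → Finset ℤ}

lemma mB_extB_low (hρ : IsStandardB n k ρ) {j : Fin (2*(k+1)+1)} (h : j.val < 2*k+1) :
    mB (extB n k ρ) j = mB ρ ⟨j.val, h⟩ := by
  rw [mB_eq, extB_lt h, mB_eq]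

lemma losB'_extB (hρ : IsStandardB n k ρ) :
    losB' (extB n k ρ) = losB' ρ + (2*k+2) := by
  have hsub := subset_angleB hρ.1
  have hne := hρ.1.1
  have hExt := extB_standard hρ
  set e : ℤ × Fin (2*k+1) → ℤ × Fin (2*(k+1)+1) :=
    fun q => (q.1, Fin.castLE (by omega) q.2) with he_def
  have hset : losSet (extB n k ρ) = e '' losSet ρ ∪
      (fun j => (((n:ℤ)+1), j)) '' {j : Fin (2*(k+1)+1) | j.val < 2*k+2} := by
    ext ⟨s, j⟩
    simp only [losSet, Set.mem_setOf_eq, Set.mem_union, Set.mem_image, Prod.exists]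
    constructor
    · rintro ⟨⟨i, hji, hsi⟩, hm⟩
      rcases extB_cases (ρ := ρ) (n := n) i with ⟨h1, hv1⟩ | ⟨h1, hv1⟩ | ⟨h1, hv1⟩ <;>
        rw [hv1] at hsi
      · have hjlt : j.val < 2*k+1 := lt_trans (Fin.lt_def.1 hji) h1
        refine Or.inl ⟨s, ⟨j.val, hjlt⟩, ⟨⟨⟨i.val, h1⟩, ?_, hsi⟩, ?_⟩, ?_⟩
        · exact Fin.lt_def.2 (Fin.lt_def.1 hji)
        · rw [← mB_extB_low hρ hjlt]
          exact hm
        · simp only [he_def]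
          exact congrArg (fun t => (s, t)) (Fin.ext rfl)
      · rw [Finset.mem_singleton] at hsi
        subst hsi
        exfalso
        have h2 : (0:ℤ) ≤ mB (extB n k ρ) j := by
          rw [mB_eq]
          exact mabs_nonneg (hExt.1.1 j)
        omega
      · rw [Finset.mem_singleton] at hsi
        subst hsi
        refine Or.inr ⟨j, ?_, rfl⟩
        have := Fin.lt_def.1 hji
        show j.val < 2*k+2
        omega
    · rintro (⟨s', j', ⟨⟨i', hji', hsi'⟩, hm'⟩, he'⟩ | ⟨j', hj', he'⟩)
      · obtain ⟨rfl, rfl⟩ : s' = s ∧ Fin.castLE (by omega : 2*k+1 ≤ 2*(k+1)+1) j' = j := by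
          constructor
          · exact congrArg Prod.fst he'
          · exact congrArg Prod.snd he'
        refine ⟨⟨Fin.castLE (by omega) i', ?_, ?_⟩, ?_⟩
        · exact Fin.lt_def.2 (Fin.lt_def.1 hji')
        · rw [extB_lt (by simpa using i'.isLt)]
          convert hsi' using 2
          exact Fin.ext (by simp)
        · rw [mB_extB_low hρ (by simpa using j'.isLt)]
          convert hm' using 3
          simp
      · have hjv : j'.val < 2*k+2 := hj'
        obtain ⟨rfl, rfl⟩ : (n:ℤ)+1 = s ∧ j' = j := by
          constructor
          · exact congrArg Prod.fst he'
          · exact congrArg Prod.snd he'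
        refine ⟨⟨⟨2*k+2, by omega⟩, Fin.lt_def.2 (by simpa using hjv), ?_⟩, ?_⟩
        · rw [extB_top rfl]
          exact Finset.mem_singleton_self _
        · show mB (extB n k ρ) j' ≤ (n:ℤ)+1
          by_cases hlow : j'.val < 2*k+1
          · rw [mB_extB_low hρ hlow, mB_eq]
            have := mabs_le_coe (hne ⟨j'.val, hlow⟩) (hsub ⟨j'.val, hlow⟩)
            omega
          · have hmid : j'.val = 2*k+1 := by omega
            rw [mB_eq, extB_mid hmid, mabs_singleton, abs_neg,
              abs_of_nonneg (by omega : (0:ℤ) ≤ (n:ℤ)+1)]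
  have hdisj : Disjoint (e '' losSet ρ)
      ((fun j => (((n:ℤ)+1), j)) '' {j : Fin (2*(k+1)+1) | j.val < 2*k+2}) := by
    rw [Set.disjoint_left]
    rintro ⟨s, j⟩ ⟨⟨s', j'⟩, ⟨⟨i', -, hsi'⟩, -⟩, he1⟩ ⟨j'', -, he2⟩
    have hs1 : s' = s := congrArg Prod.fst he1
    have hs2 : (n:ℤ)+1 = s := congrArg Prod.fst he2
    subst hs1
    have h2 : |s'| ≤ (n:ℤ) := abs_le_of_standard hρ hsi'
    have h3 := abs_nonneg s'
    rcases abs_cases s' with ⟨h1, -⟩ | ⟨h1, -⟩ <;> omega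
  have hinj : Function.Injective e := by
    intro a b hab
    simp only [he_def] at hab
    have h1 := congrArg Prod.fst hab
    have h2 := congrArg Prod.snd hab
    simp only at h1 h2
    exact Prod.ext h1 (Fin.castLE_injective _ h2)
  rw [losB'_eq, losB'_eq, hset,
    Set.ncard_union_eq hdisj ((losSet_finite hsub).image _) ((Set.toFinite _).image _),
    Set.ncard_image_of_injective _ hinj]
  congr 1
  have hcinj : Function.Injective (fun j : Fin (2*(k+1)+1) => (((n:ℤ)+1), j)) := by
    intro a b h
    exact congrArg Prod.snd h
  rw [Set.ncard_image_of_injective _ hcinj,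
    show {j : Fin (2*(k+1)+1) | j.val < 2*k+2} = ↑(Finset.Iio (⟨2*k+2, by omega⟩ : Fin (2*(k+1)+1)))
      by ext j; simp [Fin.lt_def],
    Set.ncard_coe_finset, Fin.card_Iio]

lemma tnew_spec {S : Fin (2*(k+1)+1) → Finset ℤ} (hS : IsStandardB (n+1) (k+1) S)
    (hlast : S ⟨2*(k+1), by omega⟩ = {((n:ℤ)+1)}) :
    (fun j : Fin (2*k+1) => S (Fin.castLE (by omega) j)) ∈ PSet n k ∧
      extB n k (fun j : Fin (2*k+1) => S (Fin.castLE (by omega) j)) = S := by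
  have hpair := hS.1.2.2.2.2.2 (k+1) (by omega) (by omega)
  have hidx : (⟨2*(k+1)-1, by omega⟩ : Fin (2*(k+1)+1)) = ⟨2*k+1, by omega⟩ :=
    Fin.ext (by simp only [Fin.val_mk]; omega)
  have hmid : S ⟨2*k+1, by omega⟩ = {-((n:ℤ)+1)} := by
    have h1 : Finset.image (fun x => -x) (S ⟨2*(k+1), by omega⟩) = S ⟨2*(k+1)-1, by omega⟩ := by
      rw [hpair]
      ext y
      simp only [Finset.mem_image]
      constructor
      · rintro ⟨z, ⟨w, hw, rfl⟩, rfl⟩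
        rwa [neg_neg]
      · intro hy
        exact ⟨-y, ⟨y, hy, rfl⟩, neg_neg y⟩
    rw [hidx] at h1
    rw [← h1, hlast]
    rfl
  have hne' : ∀ (j : Fin (2*k+1)) (x : ℤ), x ∈ S (Fin.castLE (by omega : 2*k+1 ≤ 2*(k+1)+1) j) →
      |x| ≤ (n:ℤ) := by
    intro j x hx
    have hx1 := mem_angleB.1 (subset_angleB hS.1 _ hx)
    push_cast at hx1
    have hx2 : x ≠ (n:ℤ)+1 := by
      rintro rfl
      have hmem : ((n:ℤ)+1) ∈ S ⟨2*(k+1), by omega⟩ := by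
        rw [hlast]; exact Finset.mem_singleton_self _
      have := block_eq_of_mem hS.1 hx hmem
      have hv := congrArg Fin.val this
      simp only [Fin.coe_castLE, Fin.val_mk] at hv
      omega
    have hx3 : x ≠ -((n:ℤ)+1) := by
      rintro rfl
      have hmem : (-((n:ℤ)+1)) ∈ S ⟨2*k+1, by omega⟩ := by
        rw [hmid]; exact Finset.mem_singleton_self _
      have := block_eq_of_mem hS.1 hx hmem
      have hv := congrArg Fin.val this
      simp only [Fin.coe_castLE, Fin.val_mk] at hv
      omega
    rcases abs_cases x with ⟨h1, -⟩ | ⟨h1, -⟩ <;> omega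
  constructor
  · refine ⟨⟨?_, ?_, ?_, ?_, ?_, ?_⟩, ?_, ?_⟩
    · intro j
      exact hS.1.1 _
    · intro i j hij
      refine hS.1.2.1 _ _ ?_
      intro h
      exact hij (Fin.castLE_injective _ h)
    · ext x
      simp only [Finset.mem_biUnion, Finset.mem_univ, true_and]
      constructor
      · rintro ⟨j, hj⟩
        exact mem_angleB.2 (hne' j x hj)
      · intro hx
        have hxa := mem_angleB.1 hx
        have hx' : x ∈ angleB (n+1) := by
          rw [mem_angleB]; push_cast; omega
        obtain ⟨i, hi⟩ := exists_block hS.1 hx'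
        have hiv : i.val < 2*k+1 := by
          by_contra hiv
          have : i.val = 2*k+1 ∨ i.val = 2*k+2 := by
            have := i.isLt; omega
          rcases this with hv | hv
          · have : i = ⟨2*k+1, by omega⟩ := Fin.ext hv
            rw [this, hmid, Finset.mem_singleton] at hi
            subst hi
            rw [abs_neg, abs_of_nonneg (by omega : (0:ℤ) ≤ (n:ℤ)+1)] at hxa
            omega
          · have : i = ⟨2*(k+1), by omega⟩ := Fin.ext (by simp only [Fin.val_mk]; omega)
            rw [this, hlast, Finset.mem_singleton] at hi
            subst hi
            rw [abs_of_nonneg (by omega : (0:ℤ) ≤ (n:ℤ)+1)] at hxa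
            omega
        refine ⟨⟨i.val, hiv⟩, ?_⟩
        convert hi using 2
        exact Fin.ext (by simp)
    · show (0:ℤ) ∈ S (Fin.castLE (by omega) (0 : Fin (2*k+1)))
      have : Fin.castLE (by omega : 2*k+1 ≤ 2*(k+1)+1) (0 : Fin (2*k+1)) =
          (0 : Fin (2*(k+1)+1)) := Fin.ext (by simp)
      rw [this]
      exact zero_mem_zero hS.1
    · intro x hx
      have : Fin.castLE (by omega : 2*k+1 ≤ 2*(k+1)+1) (0 : Fin (2*k+1)) =
          (0 : Fin (2*(k+1)+1)) := Fin.ext (by simp)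
      simp only [this] at hx ⊢
      exact hS.1.2.2.2.2.1 x hx
    · intro i hi h
      exact hS.1.2.2.2.2.2 i hi (by omega)
    · intro i hi h
      exact hS.2.1 i hi (by omega)
    · intro i h
      exact hS.2.2 i (by omega)
  · funext j
    rcases extB_cases (ρ := fun j : Fin (2*k+1) => S (Fin.castLE (by omega) j)) (n := n) j
      with ⟨h1, hv1⟩ | ⟨h1, hv1⟩ | ⟨h1, hv1⟩ <;> rw [hv1]
    · exact congrArg S (Fin.ext rfl)
    · rw [← hmid]
      exact congrArg S (Fin.ext (by simp only [Fin.val_mk]; omega))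
    · rw [← hlast]
      exact congrArg S (Fin.ext (by simp only [Fin.val_mk]; omega))

end Ext2

end Stmt4Aux


namespace Stmt4Aux

open Polynomial

/-- Partitions whose last block is {n+1}. -/
def Tnew (n k : ℕ) : Set (Fin (2*(k+1)+1) → Finset ℤ) :=
  {S | IsStandardB (n+1) (k+1) S ∧ S ⟨2*(k+1), by omega⟩ = {((n:ℤ)+1)}}

/-- Partitions with n+1 in block p, and last block not {n+1}. -/
def Told (n k : ℕ) (p : Fin (2*(k+1)+1)) : Set (Fin (2*(k+1)+1) → Finset ℤ) :=
  {S | IsStandardB (n+1) (k+1) S ∧ ((n:ℤ)+1) ∈ S p ∧ S ⟨2*(k+1), by omega⟩ ≠ {((n:ℤ)+1)}}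

lemma split_eq (n k : ℕ) :
    {S : Fin (2*(k+1)+1) → Finset ℤ | IsStandardB (n+1) (k+1) S} =
      Tnew n k ∪ ⋃ p, Told n k p := by
  ext S
  simp only [Set.mem_setOf_eq, Set.mem_union, Set.mem_iUnion, Tnew, Told]
  constructor
  · intro hS
    by_cases hl : S ⟨2*(k+1), by omega⟩ = {((n:ℤ)+1)}
    · exact Or.inl ⟨hS, hl⟩
    · have hmem : ((n:ℤ)+1) ∈ angleB (n+1) := by
        rw [mem_angleB, abs_of_nonneg (by omega : (0:ℤ) ≤ (n:ℤ)+1)]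
        push_cast
        omega
      obtain ⟨p, hp⟩ := exists_block hS.1 hmem
      exact Or.inr ⟨p, hS, hp, hl⟩
  · rintro (⟨hS, -⟩ | ⟨p, hS, -, -⟩) <;> exact hS

lemma finsum_mem_mul_const {α : Type*} {s : Set α} (hs : s.Finite)
    (f : α → Polynomial ℤ) (c : Polynomial ℤ) :
    ∑ᶠ i ∈ s, (f i * c) = (∑ᶠ i ∈ s, f i) * c := by
  rw [finsum_mem_eq_finite_toFinset_sum _ hs, finsum_mem_eq_finite_toFinset_sum _ hs,
    ← Finset.sum_mul]

lemma tnew_sum (n k : ℕ) :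
    (∑ᶠ S ∈ Tnew n k, (Polynomial.X : Polynomial ℤ) ^ losB' S) =
      (∑ᶠ ρ ∈ PSet n k, (Polynomial.X : Polynomial ℤ) ^ losB' ρ) * Polynomial.X ^ (2*k+2) := by
  rw [← finsum_mem_mul_const (PSet_finite n k)]
  refine (finsum_mem_eq_of_bijOn (extB n k) ⟨?_, ?_, ?_⟩ ?_).symm
  · intro ρ hρ
    exact ⟨extB_standard hρ, extB_top (by simp only [Fin.val_mk]; omega)⟩
  · intro ρ hρ ρ' hρ' heq
    have hr : ∀ σ : Fin (2*k+1) → Finset ℤ, ∀ j : Fin (2*k+1),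
        extB n k σ (Fin.castLE (by omega) j) = σ j := by
      intro σ j
      rw [extB_lt (by simpa using j.isLt)]
      exact congrArg σ (Fin.ext rfl)
    funext j
    rw [← hr ρ j, ← hr ρ' j, heq]
  · intro S hS
    obtain ⟨h1, h2⟩ := tnew_spec hS.1 hS.2
    exact ⟨_, h1, h2⟩
  · intro ρ hρ
    rw [← pow_add, losB'_extB hρ]

lemma told_sum (n k : ℕ) (p : Fin (2*(k+1)+1)) :
    (∑ᶠ S ∈ Told n k p, (Polynomial.X : Polynomial ℤ) ^ losB' S) =
      (∑ᶠ ρ ∈ PSet n (k+1), (Polynomial.X : Polynomial ℤ) ^ losB' ρ) * Polynomial.X ^ (p.val) := by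
  rw [← finsum_mem_mul_const (PSet_finite n (k+1))]
  refine (finsum_mem_eq_of_bijOn (insB n p) ⟨?_, ?_, ?_⟩ ?_).symm
  · intro ρ hρ
    exact ⟨insB_standard hρ p, mem_insB.2 (Or.inr (Or.inl ⟨rfl, rfl⟩)), insB_last_ne hρ p⟩
  · intro ρ hρ ρ' hρ' heq
    rw [← delB_insB (p := p) hρ, ← delB_insB (p := p) hρ', heq]
  · intro S hS
    obtain ⟨h1, h2⟩ := told_spec hS.1 hS.2.1 hS.2.2
    exact ⟨delB n S, h1, h2⟩
  · intro ρ hρ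
    rw [← pow_add, losB'_insB hρ p]

end Stmt4Aux

/-- q^{k(k+1)} S_B[n,k] = Σ_{ρ standard} q^{los_{B'} ρ}. -/
theorem stmt4 (n k : ℕ) :
    (Polynomial.X : Polynomial ℤ) ^ (k*(k+1)) * qStirB n k =
      ∑ᶠ S ∈ {S : Fin (2*k+1) → Finset ℤ | IsStandardB n k S},
        (Polynomial.X : Polynomial ℤ) ^ losB' S := by
  induction n generalizing k with
  | zero =>
    cases k with
    | zero => exact Stmt4Aux.stmt4_k_zero 0
    | succ k =>
      have h : {S : Fin (2*(k+1)+1) → Finset ℤ | IsStandardB 0 (k+1) S} = (∅ : Set _) :=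
        Stmt4Aux.PSet_zero_succ k
      rw [h, finsum_mem_empty]
      show _ * qStirB 0 (k+1) = 0
      rw [show qStirB 0 (k+1) = 0 from rfl, mul_zero]
  | succ n ih =>
    cases k with
    | zero => exact Stmt4Aux.stmt4_k_zero (n+1)
    | succ k =>
      classical
      have hPfin := Stmt4Aux.PSet_finite (n+1) (k+1)
      have hTnewfin : (Stmt4Aux.Tnew n k).Finite :=
        hPfin.subset (fun S hS => hS.1)
      have hToldfin : ∀ p, (Stmt4Aux.Told n k p).Finite :=
        fun p => hPfin.subset (fun S hS => hS.1)
      have hdisj : Disjoint (Stmt4Aux.Tnew n k) (⋃ p, Stmt4Aux.Told n k p) := by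
        rw [Set.disjoint_left]
        intro S hS1 hS2
        obtain ⟨p, hp⟩ := Set.mem_iUnion.1 hS2
        exact hp.2.2 hS1.2
      have hpairwise : Pairwise (Function.onFun Disjoint (Stmt4Aux.Told n k)) := by
        intro p q hpq
        rw [Function.onFun, Set.disjoint_left]
        intro S hS1 hS2
        exact hpq (Stmt4Aux.block_eq_of_mem hS1.1.1 hS1.2.1 hS2.2.1)
      have hih1 : (Polynomial.X : Polynomial ℤ) ^ (k*(k+1)) * qStirB n k =
          ∑ᶠ ρ ∈ Stmt4Aux.PSet n k, (Polynomial.X : Polynomial ℤ) ^ losB' ρ := ih k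
      have hih2 : (Polynomial.X : Polynomial ℤ) ^ ((k+1)*(k+1+1)) * qStirB n (k+1) =
          ∑ᶠ ρ ∈ Stmt4Aux.PSet n (k+1), (Polynomial.X : Polynomial ℤ) ^ losB' ρ := ih (k+1)
      have houter : (∑ᶠ p : Fin (2*(k+1)+1),
            ∑ᶠ S ∈ Stmt4Aux.Told n k p, (Polynomial.X : Polynomial ℤ) ^ losB' S) =
          ∑ p : Fin (2*(k+1)+1),
            ((Polynomial.X : Polynomial ℤ) ^ ((k+1)*(k+1+1)) * qStirB n (k+1)) *
              Polynomial.X ^ (p.val) := by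
        rw [finsum_eq_sum_of_fintype]
        refine Finset.sum_congr rfl (fun p _ => ?_)
        rw [Stmt4Aux.told_sum n k p, ← hih2]
      rw [Stmt4Aux.split_eq n k,
        finsum_mem_union hdisj hTnewfin (Set.finite_iUnion hToldfin),
        finsum_mem_iUnion hpairwise hToldfin,
        Stmt4Aux.tnew_sum n k, houter, ← hih1]
      have hq : qStirB (n+1) (k+1) = qStirB n k + qb (2*(k+1)+1) * qStirB n (k+1) := by
        rw [qStirB]
      rw [hq, qb, mul_add]
      congr 1
      · have hexp : (k+1)*((k+1)+1) = k*(k+1) + (2*k+2) := by ring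
        rw [hexp, pow_add]
        ring
      · rw [Fin.sum_univ_eq_sum_range
          (fun i => ((Polynomial.X : Polynomial ℤ) ^ ((k+1)*(k+1+1)) * qStirB n (k+1)) *
            Polynomial.X ^ i), Finset.sum_mul, Finset.mul_sum]
        refine Finset.sum_congr rfl (fun i _ => ?_)
        ring
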